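/- arXiv:math/0609687 — 2 statements merged into one kernel-verified Lean document; each statement's English description precedes it below -/
import Mathlib

section
/- Let f : ℂ → ℂ be entire with |f(z)| ≤ a·exp(b|z|) for constants a > 0 and 0 < b < π. If f(u) = 0 for all u ∈ ℤ≥0, then f ≡ 0. -/
local notation "π" => Real.pi


open Complex Set Filter

noncomputable def Complex.abs : AbsoluteValue ℂ ℝ := NormedField.toAbsoluteValue ℂ

lemma Complex.norm_eq_abs (z : ℂ) : ‖z‖ = Complex.abs z := rfl

lemma Complex.abs_exp (z : ℂ) : Complex.abs (Complex.exp z) = Real.exp z.re := Complex.norm_exp z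

lemma Complex.abs_ofReal (r : ℝ) : Complex.abs (r : ℂ) = |r| := by
  show ‖(r : ℂ)‖ = |r|; simp

@[simp]
lemma Complex.abs_I : Complex.abs Complex.I = 1 := by
  show ‖Complex.I‖ = 1; simp

@[simp]
lemma Complex.abs_two : Complex.abs 2 = 2 := by
  show ‖(2 : ℂ)‖ = 2; simp

lemma Complex.continuous_abs : Continuous Complex.abs := continuous_norm

lemma Complex.abs_cpow_eq_rpow_re_of_pos {x : ℝ} (hx : 0 < x) (y : ℂ) :
    Complex.abs ((x : ℂ) ^ y) = x ^ y.re := Complex.norm_cpow_eq_rpow_re_of_pos hx y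

lemma Complex.abs_le_abs_re_add_abs_im (z : ℂ) : Complex.abs z ≤ |z.re| + |z.im| :=
  Complex.norm_le_abs_re_add_abs_im z

lemma Complex.abs_im_le_abs (z : ℂ) : |z.im| ≤ Complex.abs z := Complex.abs_im_le_norm z

lemma Complex.abs_re_le_abs (z : ℂ) : |z.re| ≤ Complex.abs z := Complex.abs_re_le_norm z


open scoped Classical in
noncomputable def FF (f : ℂ → ℂ) : ℂ → ℂ := fun z =>
  if ∃ n : ℤ, z = (n : ℂ) then deriv f z / ((π : ℂ) * Complex.cos ((π : ℂ) * z))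
  else f z / Complex.sin ((π : ℂ) * z)

lemma sin_pi_int (n : ℤ) : Complex.sin ((π : ℂ) * n) = 0 := by
  rw [mul_comm]; exact Complex.sin_int_mul_pi n

lemma sin_pi_ne_zero {z : ℂ} (h : ¬ ∃ n : ℤ, z = (n : ℂ)) : Complex.sin ((π : ℂ) * z) ≠ 0 := by
  intro hs
  rw [Complex.sin_eq_zero_iff] at hs
  rcases hs with ⟨k, hk⟩
  have hπ : (π : ℂ) ≠ 0 := Complex.ofReal_ne_zero.mpr Real.pi_ne_zero
  refine h ⟨k, ?_⟩
  have : (π : ℂ) * z = (π : ℂ) * k := by rw [hk]; ring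
  exact mul_left_cancel₀ hπ this

lemma FF_eq {f : ℂ → ℂ} {z : ℂ} (h : ¬ ∃ n : ℤ, z = (n : ℂ)) :
    FF f z = f z / Complex.sin ((π : ℂ) * z) := by
  rw [FF]; exact if_neg h

lemma f_eq_FF_mul {f : ℂ → ℂ} {z : ℂ} (h : ¬ ∃ n : ℤ, z = (n : ℂ)) :
    f z = FF f z * Complex.sin ((π : ℂ) * z) := by
  rw [FF_eq h, div_mul_cancel₀ _ (sin_pi_ne_zero h)]

lemma abs_cos_pi_int (n : ℤ) : Complex.abs (Complex.cos ((π : ℂ) * n)) = 1 := by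
  have h1 : Complex.cos ((π : ℂ) * n) ^ 2 = 1 := by
    have := Complex.sin_sq_add_cos_sq ((π : ℂ) * n)
    rw [sin_pi_int] at this; simpa using this
  have h2 : Complex.abs (Complex.cos ((π : ℂ) * n)) ^ 2 = 1 := by
    rw [← map_pow, h1, map_one]
  nlinarith [Complex.abs.nonneg (Complex.cos ((π : ℂ) * n))]

lemma FF_differentiableAt {f : ℂ → ℂ} (hf : Differentiable ℂ f)
    (hz : ∀ n : ℕ, f (n : ℂ) = 0) {z : ℂ} (hre : -1 < z.re) :
    DifferentiableAt ℂ (FF f) z := by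
  by_cases h : ∃ n : ℤ, z = (n : ℂ)
  · rcases h with ⟨n, rfl⟩
    have hnre : (-1 : ℝ) < (n : ℝ) := by simpa using hre
    have hn0 : (0 : ℤ) ≤ n := by
      have : (-1 : ℤ) < n := by exact_mod_cast hnre
      omega
    have hfn : f (n : ℂ) = 0 := by
      have := hz n.toNat
      rwa [show ((n.toNat : ℕ) : ℂ) = (n : ℂ) by exact_mod_cast congrArg Int.cast (Int.toNat_of_nonneg hn0)] at this
    set s : ℂ → ℂ := fun w => Complex.sin ((π : ℂ) * w) with hs_def
    have hsdiff : Differentiable ℂ s := fun w =>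
      (Complex.differentiable_sin.comp (differentiable_id.const_mul _)) w
    set g := dslope f (n : ℂ) with hg_def
    set h := dslope s (n : ℂ) with hh_def
    have hgd : Differentiable ℂ g := by
      have := (Complex.differentiableOn_dslope (c := (n : ℂ)) (s := univ) univ_mem).mpr hf.differentiableOn
      rwa [← differentiableOn_univ]
    have hhd : Differentiable ℂ h := by
      have := (Complex.differentiableOn_dslope (c := (n : ℂ)) (s := univ) univ_mem).mpr hsdiff.differentiableOn
      rwa [← differentiableOn_univ]
    have hderiv_s : deriv s (n : ℂ) = Complex.cos ((π : ℂ) * n) * (π : ℂ) := by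
      have h1 : HasDerivAt (fun w : ℂ => (π : ℂ) * w) ((π : ℂ)) (n : ℂ) := by
        simpa using (hasDerivAt_id (n : ℂ)).const_mul (π : ℂ)
      have h2 : HasDerivAt s (Complex.cos ((π : ℂ) * n) * (π : ℂ)) (n : ℂ) :=
        (Complex.hasDerivAt_sin ((π : ℂ) * n)).comp _ h1
      exact h2.deriv
    have hhn : h (n : ℂ) = Complex.cos ((π : ℂ) * n) * (π : ℂ) := by
      rw [hh_def, dslope_same, hderiv_s]
    have hhne : h (n : ℂ) ≠ 0 := by
      rw [hhn]
      intro hc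
      have := abs_cos_pi_int n
      rw [show Complex.cos ((π : ℂ) * n) = 0 from by
        have hπ : (π : ℂ) ≠ 0 := Complex.ofReal_ne_zero.mpr Real.pi_ne_zero
        exact (mul_eq_zero.mp hc).resolve_right hπ] at this
      simp at this
    have heq : FF f =ᶠ[nhds (n : ℂ)] fun w => g w / h w := by
      filter_upwards [Metric.ball_mem_nhds (n : ℂ) one_pos] with w hw
      rcases eq_or_ne w (n : ℂ) with rfl | hwn
      · rw [show FF f (n : ℂ) = deriv f (n : ℂ) / ((π : ℂ) * Complex.cos ((π : ℂ) * (n : ℂ))) from by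
          rw [FF]; exact if_pos ⟨n, rfl⟩]
        rw [hg_def, hh_def, dslope_same, dslope_same, hderiv_s, mul_comm]
      · have hwint : ¬ ∃ m : ℤ, w = (m : ℂ) := by
          rintro ⟨m, rfl⟩
          rw [Metric.mem_ball] at hw
          have : Complex.abs ((m : ℂ) - (n : ℂ)) < 1 := by rwa [Complex.dist_eq] at hw
          rw [show ((m : ℂ) - (n : ℂ)) = ((m - n : ℤ) : ℂ) by push_cast; ring] at this
          rw [show Complex.abs ((m - n : ℤ) : ℂ) = |((m - n : ℤ) : ℝ)| by
            rw [← Complex.ofReal_intCast, Complex.abs_ofReal]] at this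
          have hmn : m = n := by
            have h' : |(m : ℝ) - (n : ℝ)| < 1 := by push_cast at this ⊢; exact this
            have := abs_lt.mp h'
            have h1 : (-1 : ℝ) < ((m - n : ℤ) : ℝ) := by push_cast; linarith [this.1]
            have h2 : ((m - n : ℤ) : ℝ) < 1 := by push_cast; linarith [this.2]
            have h1' : (-1 : ℤ) < m - n := by exact_mod_cast h1
            have h2' : (m - n : ℤ) < 1 := by exact_mod_cast h2
            omega
          exact hwn (by rw [hmn])
        rw [FF_eq hwint, hg_def, hh_def, dslope_of_ne _ hwn, dslope_of_ne _ hwn]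
        rw [slope_def_field, slope_def_field, hfn, hs_def]
        simp only [sin_pi_int]
        rw [sub_zero, sub_zero, div_div_div_cancel_right₀]
        exact sub_ne_zero.mpr hwn
    exact ((hgd (n : ℂ)).div (hhd (n : ℂ)) hhne).congr_of_eventuallyEq heq
  · have hsne : Complex.sin ((π : ℂ) * z) ≠ 0 := sin_pi_ne_zero h
    have hcont : ContinuousAt (fun w => Complex.sin ((π : ℂ) * w)) z :=
      (Complex.continuous_sin.comp (continuous_const.mul continuous_id)).continuousAt
    have hev : ∀ᶠ w in nhds z, Complex.sin ((π : ℂ) * w) ≠ 0 :=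
      hcont.eventually_ne hsne
    have heq : FF f =ᶠ[nhds z] fun w => f w / Complex.sin ((π : ℂ) * w) := by
      filter_upwards [hev] with w hw
      exact FF_eq (fun hc => hw (by rcases hc with ⟨m, rfl⟩; exact sin_pi_int m))
    have hsd : DifferentiableAt ℂ (fun w => Complex.sin ((π : ℂ) * w)) z :=
      (Complex.differentiable_sin.comp (differentiable_id.const_mul _)) z
    exact (((hf z).div hsd hsne)).congr_of_eventuallyEq heq

open Complex Set Filter

lemma sin_pi_abs_eq (z : ℂ) : Complex.abs (Complex.sin ((π:ℂ)*z))
    = Complex.abs (Complex.exp (-((π:ℂ)*z) * I) - Complex.exp (((π:ℂ)*z) * I)) / 2 := by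
  rw [Complex.sin]; simp [map_div₀, map_mul]

-- lower bound: sinh(π |im z|) ≤ |sin (π z)|
lemma sin_pi_lower (z : ℂ) :
    (Real.exp (π * |z.im|) - Real.exp (-(π * |z.im|))) / 2 ≤ Complex.abs (Complex.sin ((π:ℂ) * z)) := by
  have hre1 : (-((π:ℂ)*z) * I).re = π * z.im := by simp
  have hre2 : (((π:ℂ)*z) * I).re = -(π * z.im) := by simp
  have h1 : Real.exp (π * z.im) - Real.exp (-(π * z.im))
      ≤ Complex.abs (Complex.exp (-((π:ℂ)*z) * I) - Complex.exp (((π:ℂ)*z) * I)) := by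
    have := norm_sub_norm_le (Complex.exp (-((π:ℂ)*z) * I)) (Complex.exp (((π:ℂ)*z) * I))
    rw [Complex.norm_eq_abs, Complex.norm_eq_abs, Complex.norm_eq_abs,
      Complex.abs_exp, Complex.abs_exp, hre1, hre2] at this
    exact this
  have h2 : Real.exp (-(π * z.im)) - Real.exp (π * z.im)
      ≤ Complex.abs (Complex.exp (-((π:ℂ)*z) * I) - Complex.exp (((π:ℂ)*z) * I)) := by
    have := norm_sub_norm_le (Complex.exp (((π:ℂ)*z) * I)) (Complex.exp (-((π:ℂ)*z) * I))
    rw [norm_sub_rev, Complex.norm_eq_abs, Complex.norm_eq_abs, Complex.norm_eq_abs,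
      Complex.abs_exp, Complex.abs_exp, hre1, hre2] at this
    exact this
  rw [sin_pi_abs_eq]
  rcases abs_cases z.im with ⟨he, _⟩ | ⟨he, _⟩
  · rw [he]; linarith
  · rw [he, mul_neg, neg_neg]; linarith

lemma sin_pi_upper (z : ℂ) :
    Complex.abs (Complex.sin ((π:ℂ) * z)) ≤ Real.exp (π * |z.im|) := by
  rw [sin_pi_abs_eq]
  have hre1 : (-((π:ℂ)*z) * I).re = π * z.im := by simp
  have hre2 : (((π:ℂ)*z) * I).re = -(π * z.im) := by simp
  have h1 : Complex.abs (Complex.exp (-((π:ℂ)*z) * I) - Complex.exp (((π:ℂ)*z) * I))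
      ≤ Real.exp (π * z.im) + Real.exp (-(π * z.im)) := by
    have := norm_sub_le (Complex.exp (-((π:ℂ)*z) * I)) (Complex.exp (((π:ℂ)*z) * I))
    rw [Complex.norm_eq_abs, Complex.norm_eq_abs, Complex.norm_eq_abs,
      Complex.abs_exp, Complex.abs_exp, hre1, hre2] at this
    exact this
  have e1 : Real.exp (π * z.im) ≤ Real.exp (π * |z.im|) :=
    Real.exp_le_exp.mpr (by nlinarith [le_abs_self z.im, Real.pi_pos])
  have e2 : Real.exp (-(π * z.im)) ≤ Real.exp (π * |z.im|) :=
    Real.exp_le_exp.mpr (by nlinarith [neg_le_abs z.im, Real.pi_pos])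
  linarith

-- |sin πz| ≥ e^{π|y|}/4 for |y| ≥ 1/2
lemma sin_pi_ge_quarter {z : ℂ} (h : 1/2 ≤ |z.im|) :
    Real.exp (π * |z.im|) / 4 ≤ Complex.abs (Complex.sin ((π:ℂ) * z)) := by
  refine le_trans ?_ (sin_pi_lower z)
  set t := π * |z.im| with ht
  have ht1 : (3/2 : ℝ) ≤ t := by
    have := Real.pi_gt_three
    rw [ht]; nlinarith
  have hh : Real.exp (-t) * Real.exp t = 1 := by rw [← Real.exp_add]; simp
  have h4 : 4 ≤ Real.exp t * Real.exp t := by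
    rw [← Real.exp_add]
    have := Real.add_one_le_exp (t + t); linarith
  nlinarith [Real.exp_pos t, Real.exp_pos (-t)]

-- |sin πz| ≥ 1 for |y| ≥ 1/2
lemma one_le_sin_pi {z : ℂ} (h : 1/2 ≤ |z.im|) :
    1 ≤ Complex.abs (Complex.sin ((π:ℂ) * z)) := by
  refine le_trans ?_ (sin_pi_lower z)
  have hπ : (3:ℝ) < π := Real.pi_gt_three
  have ht1 : (3/2 : ℝ) ≤ π * |z.im| := by nlinarith
  have h1 : (5/2:ℝ) ≤ Real.exp (π * |z.im|) := by
    have := Real.add_one_le_exp (π * |z.im|); linarith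
  have hh : Real.exp (-(π * |z.im|)) * Real.exp (π * |z.im|) = 1 := by
    rw [← Real.exp_add]; simp
  nlinarith [Real.exp_pos (-(π * |z.im|)), Real.exp_pos (π * |z.im|)]

-- |sin πz| ≥ 1 on vertical lines re = n + 1/2
lemma one_le_sin_pi_vertical {z : ℂ} (n : ℤ) (h : z.re = (n : ℝ) + 1/2) :
    1 ≤ Complex.abs (Complex.sin ((π:ℂ) * z)) := by
  have hexp : (π:ℂ) * z = (π:ℂ) * n + ((π:ℂ)/2 + ((π * z.im : ℝ):ℂ) * I) := by
    apply Complex.ext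
    · simp [h]; ring
    · simp
  rw [hexp, Complex.sin_add]
  rw [show Complex.sin ((π:ℂ)*n) = 0 from by rw [mul_comm]; exact Complex.sin_int_mul_pi n]
  rw [zero_mul, zero_add]
  rw [Complex.sin_add, Complex.sin_pi_div_two, Complex.cos_pi_div_two]
  rw [one_mul, zero_mul, add_zero]
  rw [Complex.cos_mul_I, map_mul]
  have h1 : Complex.abs (Complex.cos ((π:ℂ)*n)) = 1 := by
    have hs : Complex.sin ((π:ℂ)*n) = 0 := by rw [mul_comm]; exact Complex.sin_int_mul_pi n
    have h1 : Complex.cos ((π:ℂ) * n) ^ 2 = 1 := by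
      have := Complex.sin_sq_add_cos_sq ((π:ℂ) * n)
      rw [hs] at this; simpa using this
    have h2 : Complex.abs (Complex.cos ((π:ℂ) * n)) ^ 2 = 1 := by
      rw [← map_pow, h1, map_one]
    nlinarith [Complex.abs.nonneg (Complex.cos ((π:ℂ) * n))]
  rw [h1, one_mul]
  rw [show Complex.cosh (((π * z.im : ℝ)):ℂ) = ((Real.cosh (π * z.im) : ℝ) : ℂ) from by
    rw [← Complex.ofReal_cosh]]
  rw [Complex.abs_ofReal, abs_of_pos (Real.cosh_pos _)]
  exact Real.one_le_cosh _

open Complex Set Filter Metric Bornology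

variable {f : ℂ → ℂ} {a b : ℝ}

-- Lemma A : off the real axis
lemma FF_bound_off_axis (ha : 0 < a)
    (hbd : ∀ z : ℂ, Complex.abs (f z) ≤ a * Real.exp (b * Complex.abs z))
    {z : ℂ} (him : 1/2 ≤ |z.im|) :
    Complex.abs (FF f z) ≤ 4 * a * Real.exp (b * Complex.abs z - π * |z.im|) := by
  have hni : ¬ ∃ n : ℤ, z = (n : ℂ) := by
    rintro ⟨n, rfl⟩
    simp at him; linarith
  rw [FF_eq hni, map_div₀]
  have hsin := sin_pi_ge_quarter him
  have hsinpos : (0:ℝ) < Real.exp (π * |z.im|) / 4 := by positivity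
  calc Complex.abs (f z) / Complex.abs (Complex.sin ((π:ℂ)*z))
      ≤ (a * Real.exp (b * Complex.abs z)) / (Real.exp (π * |z.im|) / 4) := by
        apply div_le_div₀ (by positivity) (hbd z) hsinpos hsin
    _ = 4 * a * Real.exp (b * Complex.abs z - π * |z.im|) := by
        rw [Real.exp_sub]; field_simp

lemma FF_bound_rect (ha : 0 < a) (hb : 0 < b)
    (hf : Differentiable ℂ f) (hz : ∀ n : ℕ, f (n : ℂ) = 0)
    (hbd : ∀ z : ℂ, Complex.abs (f z) ≤ a * Real.exp (b * Complex.abs z))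
    {z : ℂ} (hre : -(1/2) ≤ z.re) (him : |z.im| ≤ 1/2) :
    Complex.abs (FF f z) ≤ a * Real.exp (b * (Complex.abs z + 2)) := by
  set n : ℤ := round z.re with hn
  have hn0 : (0:ℤ) ≤ n := by
    rw [hn, round_eq]
    have : (0:ℝ) ≤ z.re + 1/2 := by linarith
    positivity
  have hnr : (0:ℝ) ≤ (n:ℝ) := by exact_mod_cast hn0
  have hnz : |z.re - (n:ℝ)| ≤ 1/2 := abs_sub_round z.re
  set U : Set ℂ := Ioo ((n:ℝ) - 1/2) ((n:ℝ) + 1/2) ×ℂ Ioo (-(1/2):ℝ) (1/2) with hU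
  have hlt1 : ((n:ℝ) - 1/2) < ((n:ℝ) + 1/2) := by linarith
  have hlt2 : (-(1/2):ℝ) < 1/2 := by norm_num
  have hclosure : closure U = Icc ((n:ℝ) - 1/2) ((n:ℝ) + 1/2) ×ℂ Icc (-(1/2):ℝ) (1/2) := by
    rw [hU, Complex.closure_reProdIm, closure_Ioo hlt1.ne, closure_Ioo hlt2.ne]
  have hbounded : IsBounded U := (isBounded_Ioo _ _).reProdIm (isBounded_Ioo _ _)
  have hdiff : DiffContOnCl ℂ (FF f) U := by
    apply DifferentiableOn.diffContOnCl
    intro w hw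
    rw [hclosure, Complex.mem_reProdIm] at hw
    have hwre : ((n:ℝ) - 1/2) ≤ w.re := hw.1.1
    exact (FF_differentiableAt hf hz (by linarith : (-1:ℝ) < w.re)).differentiableWithinAt
  have hfrontier : ∀ w ∈ frontier U, ‖FF f w‖ ≤ a * Real.exp (b * (Complex.abs z + 2)) := by
    intro w hw0
    have hwmem : w ∈ Icc ((n:ℝ) - 1/2) ((n:ℝ) + 1/2) ×ℂ Icc (-(1/2):ℝ) (1/2) := by
      rw [← hclosure]; exact frontier_subset_closure hw0
    rw [Complex.mem_reProdIm, mem_Icc, mem_Icc] at hwmem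
    have hw := hw0
    rw [hU, frontier_reProdIm, closure_Ioo hlt1.ne, frontier_Ioo hlt2,
      closure_Ioo hlt2.ne, frontier_Ioo hlt1] at hw
    have hsin : 1 ≤ Complex.abs (Complex.sin ((π:ℂ)*w)) := by
      rcases hw with hw | hw
      · rw [Complex.mem_reProdIm] at hw
        have h2 : w.im = -(1/2) ∨ w.im = 1/2 := hw.2
        apply one_le_sin_pi
        rcases h2 with h | h
        · rw [h, abs_neg, _root_.abs_of_nonneg (by norm_num : (0:ℝ) ≤ 1/2)]
        · rw [h, _root_.abs_of_nonneg (by norm_num : (0:ℝ) ≤ 1/2)]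
      · rw [Complex.mem_reProdIm] at hw
        have h1 : w.re = (n:ℝ) - 1/2 ∨ w.re = (n:ℝ) + 1/2 := hw.1
        rcases h1 with h | h
        · exact one_le_sin_pi_vertical (n - 1) (by push_cast; linarith)
        · exact one_le_sin_pi_vertical n h
    have hni : ¬ ∃ m : ℤ, w = (m : ℂ) := by
      rintro ⟨m, rfl⟩
      rw [sin_pi_int m, map_zero] at hsin
      linarith
    have habsw : Complex.abs w ≤ Complex.abs z + 2 := by
      have h1 : Complex.abs (w - z) ≤ 2 := by
        have hre' : |w.re - z.re| ≤ 1 := by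
          rw [abs_le]; constructor <;> nlinarith [abs_le.mp hnz, hwmem.1.1, hwmem.1.2]
        have him' : |w.im - z.im| ≤ 1 := by
          rw [abs_le]; constructor <;> nlinarith [abs_le.mp him, hwmem.2.1, hwmem.2.2]
        calc Complex.abs (w - z) ≤ |(w - z).re| + |(w - z).im| := Complex.abs_le_abs_re_add_abs_im _
          _ ≤ 2 := by rw [Complex.sub_re, Complex.sub_im]; linarith
      calc Complex.abs w ≤ Complex.abs z + Complex.abs (w - z) := by
            have := Complex.abs.add_le z (w - z); simpa using this
        _ ≤ Complex.abs z + 2 := by linarith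
    rw [Complex.norm_eq_abs, FF_eq hni, map_div₀]
    calc Complex.abs (f w) / Complex.abs (Complex.sin ((π:ℂ)*w))
        ≤ Complex.abs (f w) := div_le_self (Complex.abs.nonneg _) hsin
      _ ≤ a * Real.exp (b * Complex.abs w) := hbd w
      _ ≤ a * Real.exp (b * (Complex.abs z + 2)) := by
          apply mul_le_mul_of_nonneg_left _ ha.le
          exact Real.exp_le_exp.mpr (by nlinarith)
  have hzmem : z ∈ closure U := by
    rw [hclosure, Complex.mem_reProdIm, mem_Icc, mem_Icc]
    constructor
    · constructor <;> nlinarith [abs_le.mp hnz]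
    · exact abs_le.mp him
  have := Complex.norm_le_of_forall_mem_frontier_norm_le hbounded hdiff hfrontier hzmem
  rwa [Complex.norm_eq_abs] at this

-- combined bound on re ≥ -1/2
lemma FF_bound_halfplane (ha : 0 < a) (hb : 0 < b)
    (hf : Differentiable ℂ f) (hz : ∀ n : ℕ, f (n : ℂ) = 0)
    (hbd : ∀ z : ℂ, Complex.abs (f z) ≤ a * Real.exp (b * Complex.abs z))
    {z : ℂ} (hre : -(1/2) ≤ z.re) :
    Complex.abs (FF f z) ≤ 4 * a * Real.exp (b * (Complex.abs z + 2)) := by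
  rcases le_or_gt (1/2) |z.im| with h | h
  · calc Complex.abs (FF f z) ≤ 4 * a * Real.exp (b * Complex.abs z - π * |z.im|) :=
        FF_bound_off_axis ha hbd h
      _ ≤ 4 * a * Real.exp (b * (Complex.abs z + 2)) := by
        apply mul_le_mul_of_nonneg_left _ (by positivity)
        apply Real.exp_le_exp.mpr
        nlinarith [Real.pi_pos, abs_nonneg z.im]
  · calc Complex.abs (FF f z) ≤ a * Real.exp (b * (Complex.abs z + 2)) :=
        FF_bound_rect ha hb hf hz hbd hre h.le
      _ ≤ 4 * a * Real.exp (b * (Complex.abs z + 2)) := by nlinarith [Real.exp_pos (b * (Complex.abs z + 2))]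

open Complex Set Filter Metric Bornology

variable {f : ℂ → ℂ} {a b : ℝ}

set_option maxHeartbeats 1000000 in
lemma FF_bounded_rhp (ha : 0 < a) (hb : 0 < b) (hbπ : b < π)
    (hf : Differentiable ℂ f) (hz : ∀ n : ℕ, f (n : ℂ) = 0)
    (hbd : ∀ z : ℂ, Complex.abs (f z) ≤ a * Real.exp (b * Complex.abs z)) :
    ∃ M, 0 < M ∧ ∀ z : ℂ, 0 ≤ z.re → Complex.abs (FF f z) ≤ M := by
  have hπ : (0:ℝ) < π := Real.pi_pos
  set s0 : ℝ := (b/π + 1)/2 with hs0_def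
  have hs0pos : 0 < s0 := by rw [hs0_def]; positivity
  have hs0lt : s0 < 1 := by
    rw [hs0_def]
    have : b/π < 1 := (div_lt_one hπ).mpr hbπ
    linarith
  have hbs0 : b < π * s0 := by
    rw [hs0_def]
    have h1 : b/π < (b/π + 1)/2 := by
      have : b/π < 1 := (div_lt_one hπ).mpr hbπ
      linarith
    calc b = π * (b/π) := by field_simp
    _ < π * ((b/π + 1)/2) := by exact mul_lt_mul_of_pos_left h1 hπ
  set θ : ℝ := Real.arcsin s0 with hθ_def
  have hθpos : 0 < θ := Real.arcsin_pos.mpr hs0pos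
  have hθlt : θ < π/2 := Real.arcsin_lt_pi_div_two.mpr hs0lt
  have hsinθ : Real.sin θ = s0 := Real.sin_arcsin (by linarith) hs0lt.le
  set C₂ : ℝ := 4 * a * Real.exp (b * (1/(2*s0) + 2)) with hC₂_def
  have hC₂pos : 0 < C₂ := by positivity
  have h4a : 4 * a ≤ C₂ := by
    rw [hC₂_def]
    nlinarith [Real.one_le_exp (by positivity : (0:ℝ) ≤ b * (1/(2*s0) + 2))]
  -- the master bound valid whenever  re z ≥ 0  and  |im z| ≥ s0 * |z|  or rectangle
  have key : ∀ z : ℂ, 0 ≤ z.re → s0 * Complex.abs z ≤ |z.im| → Complex.abs (FF f z) ≤ C₂ := by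
    intro z hre him
    rcases le_or_gt (1/2) |z.im| with h | h
    · calc Complex.abs (FF f z) ≤ 4 * a * Real.exp (b * Complex.abs z - π * |z.im|) :=
          FF_bound_off_axis ha hbd h
        _ ≤ 4 * a * 1 := by
          apply mul_le_mul_of_nonneg_left _ (by positivity)
          rw [← Real.exp_zero]
          apply Real.exp_le_exp.mpr
          nlinarith [Complex.abs.nonneg z]
        _ ≤ C₂ := by linarith
    · have habs : Complex.abs z ≤ 1/(2*s0) := by
        have h1 : s0 * Complex.abs z ≤ 1/2 := him.trans h.le
        have h2 : Complex.abs z * (2*s0) ≤ 1 := by nlinarith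
        exact (le_div_iff₀ (by positivity : (0:ℝ) < 2*s0)).mpr h2
      calc Complex.abs (FF f z) ≤ a * Real.exp (b * (Complex.abs z + 2)) :=
          FF_bound_rect ha hb hf hz hbd (by linarith) h.le
        _ ≤ C₂ := by
          rw [hC₂_def]
          have := Real.exp_le_exp.mpr (by nlinarith : b * (Complex.abs z + 2) ≤ b * (1/(2*s0) + 2))
          nlinarith [Real.exp_pos (b * (Complex.abs z + 2))]
  -- strip bound via PL for the sector |arg| ≤ θ
  have sector : ∀ z : ℂ, z ≠ 0 → 0 ≤ z.re → |z.im| ≤ s0 * Complex.abs z →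
      Complex.abs (FF f z) ≤ C₂ := by
    have strip : ∀ w : ℂ, -θ ≤ w.im → w.im ≤ θ → ‖(FF f) (Complex.exp w)‖ ≤ C₂ := by
      intro w h1 h2
      show ‖(fun w => FF f (Complex.exp w)) w‖ ≤ C₂
      have hdiff : DiffContOnCl ℂ (fun w => FF f (Complex.exp w)) (Complex.im ⁻¹' Ioo (-θ) θ) := by
        apply DifferentiableOn.diffContOnCl
        intro w hw
        have hwim : |w.im| ≤ θ := by
          have := closure_minimal (preimage_mono (Ioo_subset_Icc_self : Ioo (-θ) θ ⊆ _))
            (isClosed_Icc.preimage Complex.continuous_im) hw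
          rw [mem_preimage, mem_Icc] at this
          rw [abs_le]; exact this
        have hre : 0 < (Complex.exp w).re := by
          rw [Complex.exp_re]
          apply mul_pos (Real.exp_pos _)
          apply Real.cos_pos_of_mem_Ioo
          constructor
          · nlinarith [abs_le.mp hwim]
          · nlinarith [abs_le.mp hwim]
        exact ((FF_differentiableAt hf hz (by linarith)).comp w
          (Complex.differentiable_exp w)).differentiableWithinAt
      refine PhragmenLindelof.horizontal_strip (f := fun w => FF f (Complex.exp w))
        (a := -θ) (b := θ) (C := C₂) hdiff ?_ ?_ ?_ h1 h2
      · refine ⟨1, ?_, b, ?_⟩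
        · rw [show θ - -θ = 2*θ by ring]
          rw [lt_div_iff₀ (by linarith)]
          linarith
        · apply Asymptotics.IsBigO.of_bound (4 * a * Real.exp (2*b))
          rw [Filter.eventually_inf_principal]
          apply Eventually.of_forall
          intro w hw
          rw [mem_preimage, mem_Ioo] at hw
          have hre : 0 ≤ (Complex.exp w).re := by
            rw [Complex.exp_re]
            apply mul_nonneg (Real.exp_pos _).le
            apply (Real.cos_pos_of_mem_Ioo ⟨by nlinarith, by nlinarith⟩).le
          have hbound := FF_bound_halfplane ha hb hf hz hbd
            (by linarith : -(1/2) ≤ (Complex.exp w).re)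
          show ‖FF f (Complex.exp w)‖ ≤ _
          rw [Complex.norm_eq_abs]
          have habs : Complex.abs (Complex.exp w) = Real.exp w.re := Complex.abs_exp w
          calc Complex.abs (FF f (Complex.exp w))
              ≤ 4 * a * Real.exp (b * (Real.exp w.re + 2)) := by rw [← habs]; exact hbound
            _ ≤ 4 * a * Real.exp (2*b + b * Real.exp |w.re|) := by
                apply mul_le_mul_of_nonneg_left _ (by positivity)
                apply Real.exp_le_exp.mpr
                have : Real.exp w.re ≤ Real.exp |w.re| := Real.exp_le_exp.mpr (le_abs_self _)
                nlinarith
            _ = 4 * a * Real.exp (2*b) * Real.exp (b * Real.exp |w.re|) := by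
                rw [mul_assoc (4*a), ← Real.exp_add]
            _ ≤ 4 * a * Real.exp (2*b) * ‖Real.exp (b * Real.exp (1 * |w.re|))‖ := by
                rw [one_mul, Real.norm_eq_abs, _root_.abs_of_nonneg (Real.exp_pos _).le]
      · -- lower boundary im w = -θ
        intro w hw
        show ‖FF f (Complex.exp w)‖ ≤ C₂
        rw [Complex.norm_eq_abs]
        have hre : 0 ≤ (Complex.exp w).re := by
          rw [Complex.exp_re]
          apply mul_nonneg (Real.exp_pos _).le
          rw [hw]
          apply (Real.cos_pos_of_mem_Ioo ⟨by nlinarith, by nlinarith⟩).le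
        have him : |(Complex.exp w).im| = s0 * Complex.abs (Complex.exp w) := by
          rw [Complex.exp_im, Complex.abs_exp, hw, Real.sin_neg, hsinθ]
          rw [abs_mul, abs_neg, _root_.abs_of_nonneg hs0pos.le,
            _root_.abs_of_nonneg (Real.exp_pos _).le]
          ring
        exact key _ hre him.ge
      · intro w hw
        show ‖FF f (Complex.exp w)‖ ≤ C₂
        rw [Complex.norm_eq_abs]
        have hre : 0 ≤ (Complex.exp w).re := by
          rw [Complex.exp_re]
          apply mul_nonneg (Real.exp_pos _).le
          rw [hw]
          apply (Real.cos_pos_of_mem_Ioo ⟨by nlinarith, by nlinarith⟩).le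
        have him : |(Complex.exp w).im| = s0 * Complex.abs (Complex.exp w) := by
          rw [Complex.exp_im, Complex.abs_exp, hw, hsinθ]
          rw [abs_mul, _root_.abs_of_nonneg hs0pos.le,
            _root_.abs_of_nonneg (Real.exp_pos _).le]
          ring
        exact key _ hre him.ge
    intro z hz0 hre him
    have habs : 0 < Complex.abs z := by
      rwa [Complex.abs.pos_iff]
    have harg : |Complex.arg z| ≤ θ := by
      have h1 : |Complex.arg z| ≤ π/2 := Complex.abs_arg_le_pi_div_two_iff.mpr hre
      have h2 : Real.sin (Complex.arg z) = z.im / Complex.abs z := Complex.sin_arg z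
      have h3 : -s0 ≤ Real.sin (Complex.arg z) ∧ Real.sin (Complex.arg z) ≤ s0 := by
        rw [h2]
        rw [div_le_iff₀ habs, le_div_iff₀ habs]
        constructor <;> nlinarith [abs_le.mp him, neg_abs_le z.im, le_abs_self z.im]
      have h4 := Real.arcsin_sin (x := z.arg) (by linarith [abs_le.mp h1 |>.1]) (by linarith [abs_le.mp h1 |>.2])
      rw [abs_le]
      constructor
      · have hm := Real.monotone_arcsin h3.1
        rw [h4, Real.arcsin_neg, ← hθ_def] at hm
        linarith
      · have hm := Real.monotone_arcsin h3.2
        rw [h4, ← hθ_def] at hm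
        exact hm
    have hw := strip (Complex.log z) (by rw [Complex.log_im]; linarith [abs_le.mp harg |>.1])
      (by rw [Complex.log_im]; linarith [abs_le.mp harg |>.2])
    rw [Complex.exp_log hz0, Complex.norm_eq_abs] at hw
    exact hw
  refine ⟨max C₂ (Complex.abs (FF f 0)), lt_max_of_lt_left hC₂pos, ?_⟩
  intro z hre
  rcases eq_or_ne z 0 with rfl | hz0
  · exact le_max_right _ _
  rcases le_total (|z.im|) (s0 * Complex.abs z) with h | h
  · exact (sector z hz0 hre h).trans (le_max_left _ _)
  · exact (key z hre h).trans (le_max_left _ _)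

open Complex Set Filter MeasureTheory

-- |Γ(s)| ≤ Γ(re s)
lemma abs_Gamma_le {s : ℂ} (hs : 0 < s.re) : Complex.abs (Complex.Gamma s) ≤ Real.Gamma s.re := by
  rw [Complex.Gamma_eq_integral hs, Real.Gamma_eq_integral hs]
  rw [Complex.GammaIntegral]
  have h1 := MeasureTheory.norm_integral_le_integral_norm
    (μ := volume.restrict (Ioi (0:ℝ))) (f := fun x : ℝ => ((Real.exp (-x) : ℝ) : ℂ) * (x:ℂ) ^ (s - 1))
  rw [Complex.norm_eq_abs] at h1
  refine h1.trans (le_of_eq ?_)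
  apply MeasureTheory.setIntegral_congr_fun measurableSet_Ioi
  intro x hx
  have hx0 : (0:ℝ) < x := hx
  show ‖((Real.exp (-x) : ℝ) : ℂ) * (x:ℂ) ^ (s - 1)‖ = Real.exp (-x) * x ^ (s.re - 1)
  rw [norm_mul, Complex.norm_eq_abs, Complex.norm_eq_abs, Complex.abs_ofReal,
    Complex.abs_cpow_eq_rpow_re_of_pos hx0, _root_.abs_of_nonneg (Real.exp_pos _).le]
  simp [Complex.sub_re, Complex.one_re]

lemma Gamma_le_one_of_mem {x : ℝ} (h1 : 1 ≤ x) (h2 : x ≤ 2) : Real.Gamma x ≤ 1 := by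
  have hc := Real.convexOn_Gamma.2 (mem_Ioi.mpr one_pos) (mem_Ioi.mpr two_pos)
    (by linarith : (0:ℝ) ≤ 2 - x) (by linarith : (0:ℝ) ≤ x - 1) (by ring)
  simp only [smul_eq_mul] at hc
  rw [Real.Gamma_one, Real.Gamma_two] at hc
  have harg : (2 - x) * (1:ℝ) + (x - 1) * 2 = x := by ring
  rw [harg] at hc
  linarith

-- lower bound for |Γ| on the strip 1 ≤ re ≤ 2
lemma Gamma_lower_strip : ∃ δ : ℝ, 0 < δ ∧ δ ≤ 1 ∧ ∀ s : ℂ, 1 ≤ s.re → s.re ≤ 2 →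
    δ * Real.exp (-(π * |s.im|)) ≤ Complex.abs (Complex.Gamma s) := by
  set K : Set ℂ := Icc (1:ℝ) 2 ×ℂ Icc (-1:ℝ) 1 with hK
  have hKc : IsCompact K := by
    apply Metric.isCompact_of_isClosed_isBounded
    · exact isClosed_Icc.reProdIm isClosed_Icc
    · exact (Metric.isBounded_Icc _ _).reProdIm (Metric.isBounded_Icc _ _)
  have hcont : ContinuousOn (fun s => Complex.abs (Complex.Gamma s)) K := by
    apply Complex.continuous_abs.comp_continuousOn
    intro s hs
    rw [hK, Complex.mem_reProdIm] at hs
    have hm : ∀ m : ℕ, s ≠ -m := by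
      intro m hc
      have h0 : s.re = -(m:ℝ) := by rw [hc]; simp
      have h1 := hs.1.1
      rw [h0] at h1
      have : (0:ℝ) ≤ m := Nat.cast_nonneg m
      linarith
    exact (Complex.differentiableAt_Gamma s hm).continuousAt.continuousWithinAt
  have hne : K.Nonempty := by
    refine ⟨1, ?_⟩
    rw [hK, Complex.mem_reProdIm]
    constructor <;> simp
  obtain ⟨s₀, hs₀K, hmin⟩ := hKc.exists_isMinOn hne hcont
  have hδ₁pos : 0 < Complex.abs (Complex.Gamma s₀) := by
    rw [Complex.abs.pos_iff]
    apply Complex.Gamma_ne_zero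
    intro m hc
    have hs₀re : 1 ≤ s₀.re := by
      rw [hK, Complex.mem_reProdIm] at hs₀K; exact hs₀K.1.1
    rw [hc] at hs₀re; simp at hs₀re
    have : (0:ℝ) ≤ m := Nat.cast_nonneg m
    linarith
  set δ := min (Complex.abs (Complex.Gamma s₀)) 1 with hδ
  refine ⟨δ, by positivity, min_le_right _ _, ?_⟩
  intro s h1 h2
  have hexp_le : Real.exp (-(π * |s.im|)) ≤ 1 := by
    rw [← Real.exp_zero]
    apply Real.exp_le_exp.mpr
    have : (0:ℝ) ≤ π * |s.im| := by positivity
    linarith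
  rcases le_or_gt |s.im| 1 with him | him
  · have hsK : s ∈ K := by
      rw [hK, Complex.mem_reProdIm]
      exact ⟨⟨h1, h2⟩, abs_le.mp him⟩
    have hm := hmin hsK
    calc δ * Real.exp (-(π * |s.im|)) ≤ δ * 1 :=
          mul_le_mul_of_nonneg_left hexp_le (by positivity)
      _ = δ := mul_one δ
      _ ≤ Complex.abs (Complex.Gamma s₀) := min_le_left _ _
      _ ≤ Complex.abs (Complex.Gamma s) := hm
  · have him0 : s.im ≠ 0 := by
      intro hc; rw [hc] at him; simp at him; linarith
    have hsin_ne : Complex.sin ((π:ℂ) * s) ≠ 0 := by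
      intro hc
      rw [Complex.sin_eq_zero_iff] at hc
      rcases hc with ⟨k, hk⟩
      have hs : s = (k:ℂ) := by
        have hπ : (π:ℂ) ≠ 0 := Complex.ofReal_ne_zero.mpr Real.pi_ne_zero
        have : (π:ℂ) * s = (π:ℂ) * k := by rw [hk]; ring
        exact mul_left_cancel₀ hπ this
      rw [hs] at him0; simp at him0
    have hrefl := Complex.Gamma_mul_Gamma_one_sub s
    have h1s : (1:ℂ) - s ≠ 0 := by
      intro hc
      have : s = 1 := by linear_combination -hc
      rw [this] at him0; simp at him0
    have h2s : (2:ℂ) - s ≠ 0 := by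
      intro hc
      have : s = 2 := by linear_combination -hc
      rw [this] at him0; simp at him0
    have hG3 : Complex.Gamma (3 - s) = (2 - s) * ((1 - s) * Complex.Gamma (1 - s)) := by
      have e2 := Complex.Gamma_add_one (1 - s) h1s
      rw [show (1:ℂ) - s + 1 = 2 - s by ring] at e2
      have e3 := Complex.Gamma_add_one (2 - s) h2s
      rw [show (2:ℂ) - s + 1 = 3 - s by ring, e2] at e3
      exact e3
    have habs3 : Complex.abs (Complex.Gamma (3 - s)) ≤ 1 := by
      have hre3 : (0:ℝ) < (3 - s).re := by
        simp only [Complex.sub_re]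
        norm_num
        linarith
      refine (abs_Gamma_le hre3).trans ?_
      apply Gamma_le_one_of_mem <;> simp only [Complex.sub_re] <;> norm_num <;> linarith
    have hB1 : Complex.abs (Complex.Gamma (1 - s)) ≤ 1 := by
      have e1 : |(1 - s).im| = |s.im| := by
        simp only [Complex.sub_im, Complex.one_im]
        rw [zero_sub, abs_neg]
      have e2 : |(2 - s).im| = |s.im| := by
        simp only [Complex.sub_im]
        norm_num
      have hge1 : (1:ℝ) ≤ Complex.abs (1 - s) := by
        calc (1:ℝ) ≤ |s.im| := him.le
          _ = |(1 - s).im| := e1.symm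
          _ ≤ Complex.abs (1 - s) := Complex.abs_im_le_abs _
      have hge2 : (1:ℝ) ≤ Complex.abs (2 - s) := by
        calc (1:ℝ) ≤ |s.im| := him.le
          _ = |(2 - s).im| := e2.symm
          _ ≤ Complex.abs (2 - s) := Complex.abs_im_le_abs _
      have heq : Complex.abs (2 - s) * (Complex.abs (1 - s) * Complex.abs (Complex.Gamma (1 - s))) ≤ 1 := by
        rw [← map_mul, ← map_mul, ← hG3]; exact habs3
      have t0 : (0:ℝ) ≤ Complex.abs (Complex.Gamma (1 - s)) := Complex.abs.nonneg _
      have t1 : Complex.abs (Complex.Gamma (1 - s))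
          ≤ Complex.abs (1 - s) * Complex.abs (Complex.Gamma (1 - s)) :=
        le_mul_of_one_le_left t0 hge1
      have t2 : Complex.abs (1 - s) * Complex.abs (Complex.Gamma (1 - s))
          ≤ Complex.abs (2 - s) * (Complex.abs (1 - s) * Complex.abs (Complex.Gamma (1 - s))) :=
        le_mul_of_one_le_left (by positivity) hge2
      linarith
    have habs_eq : Complex.abs (Complex.Gamma s) * Complex.abs (Complex.Gamma (1 - s))
        = π / Complex.abs (Complex.sin ((π:ℂ) * s)) := by
      rw [← map_mul, hrefl, map_div₀, Complex.abs_ofReal, _root_.abs_of_pos Real.pi_pos]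
    have hsin_le : Complex.abs (Complex.sin ((π:ℂ)*s)) ≤ Real.exp (π * |s.im|) := sin_pi_upper s
    have hsin_pos : 0 < Complex.abs (Complex.sin ((π:ℂ)*s)) := Complex.abs.pos hsin_ne
    have hABge : π * Real.exp (-(π * |s.im|)) ≤ Complex.abs (Complex.Gamma s)
        * Complex.abs (Complex.Gamma (1 - s)) := by
      rw [habs_eq, Real.exp_neg, ← div_eq_mul_inv]
      gcongr
    have hfin : π * Real.exp (-(π * |s.im|)) ≤ Complex.abs (Complex.Gamma s) := by
      nlinarith [Complex.abs.nonneg (Complex.Gamma s), Real.exp_pos (-(π * |s.im|))]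
    have : δ * Real.exp (-(π * |s.im|)) ≤ π * Real.exp (-(π * |s.im|)) := by
      have hδ1 : δ ≤ 1 := min_le_right _ _
      nlinarith [Real.exp_pos (-(π * |s.im|)), Real.pi_gt_three]
    linarith

-- lower bound for |Γ| on re ≥ 1
lemma Gamma_lower : ∃ δ : ℝ, 0 < δ ∧ δ ≤ 1 ∧ ∀ s : ℂ, 1 ≤ s.re →
    δ * Real.exp (-(π * |s.im|)) ≤ Complex.abs (Complex.Gamma s) := by
  obtain ⟨δ, hδ0, hδ1, hδ⟩ := Gamma_lower_strip
  refine ⟨δ, hδ0, hδ1, ?_⟩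
  have key : ∀ n : ℕ, ∀ s : ℂ, 1 ≤ s.re → s.re ≤ 2 + n →
      δ * Real.exp (-(π * |s.im|)) ≤ Complex.abs (Complex.Gamma s) := by
    intro n
    induction n with
    | zero => intro s h1 h2; exact hδ s h1 (by simpa using h2)
    | succ n ih =>
      intro s h1 h2
      rcases le_or_gt s.re (2 + n) with h | h
      · exact ih s h1 h
      · have hre1 : 1 ≤ (s - 1).re := by
          simp only [Complex.sub_re, Complex.one_re]
          have : (0:ℝ) ≤ n := Nat.cast_nonneg n
          linarith
        have hne : s - 1 ≠ 0 := by
          intro hc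
          have : (s - 1).re = 0 := by rw [hc]; simp
          rw [this] at hre1; linarith
        have hrec := Complex.Gamma_add_one (s - 1) hne
        rw [show s - 1 + 1 = s by ring] at hrec
        rw [hrec, map_mul]
        have him : (s - 1).im = s.im := by simp [Complex.sub_im]
        have hih := ih (s - 1) hre1 (by
          simp only [Complex.sub_re, Complex.one_re]
          push_cast at h2 ⊢
          linarith)
        rw [him] at hih
        have habs1 : 1 ≤ Complex.abs (s - 1) := by
          calc (1:ℝ) ≤ (s - 1).re := hre1
            _ ≤ |(s - 1).re| := le_abs_self _
            _ ≤ Complex.abs (s - 1) := Complex.abs_re_le_abs _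
        calc δ * Real.exp (-(π * |s.im|)) ≤ Complex.abs (Complex.Gamma (s - 1)) := hih
          _ ≤ Complex.abs (s - 1) * Complex.abs (Complex.Gamma (s - 1)) :=
            le_mul_of_one_le_left (Complex.abs.nonneg _) habs1
  intro s h1
  refine key ⌈s.re⌉₊ s h1 ?_
  have := Nat.le_ceil s.re
  linarith

-- superexponential growth of Γ(x+1) : ∀ c ≥ 0, e^{cx}/Γ(x+1) → 0
lemma exp_div_Gamma_tendsto {c : ℝ} (hc : 0 ≤ c) :
    Filter.Tendsto (fun x : ℝ => Real.exp (c * x) / Real.Gamma (x + 1)) atTop (nhds 0) := by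
  set T : ℝ := Real.exp (c + 1) with hT
  have hT1 : 1 ≤ T := by
    have h := Real.exp_le_exp.mpr (by linarith : (0:ℝ) ≤ c + 1)
    rw [Real.exp_zero] at h
    exact h
  have hT0 : 0 < T := by linarith
  -- Γ(x+1) ≥ T^x * (T * exp (-(2*T)))
  have hGamma_ge : ∀ x : ℝ, 0 ≤ x → T ^ x * (T * Real.exp (-(2*T))) ≤ Real.Gamma (x + 1) := by
    intro x hx
    have hx1 : (0:ℝ) < x + 1 := by linarith
    rw [Real.Gamma_eq_integral hx1]
    have hint : MeasureTheory.IntegrableOn (fun t : ℝ => Real.exp (-t) * t ^ (x + 1 - 1))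
        (Ioi 0) MeasureTheory.volume := Real.GammaIntegral_convergent hx1
    have hsub : Ioc T (2*T) ⊆ Ioi (0:ℝ) := fun t ht => lt_of_lt_of_le hT0 ht.1.le
    have hstep1 : ∫ t in Ioc T (2*T), Real.exp (-t) * t ^ (x + 1 - 1)
        ≤ ∫ t in Ioi (0:ℝ), Real.exp (-t) * t ^ (x + 1 - 1) := by
      apply MeasureTheory.setIntegral_mono_set hint
      · apply MeasureTheory.ae_restrict_of_forall_mem measurableSet_Ioi
        intro t ht
        have ht0 : 0 < t := ht
        positivity
      · exact HasSubset.Subset.eventuallyLE hsub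
    have hstep2 : T ^ x * Real.exp (-(2*T)) * T ≤ ∫ t in Ioc T (2*T), Real.exp (-t) * t ^ (x + 1 - 1) := by
      have hconst : ∫ t in Ioc T (2*T), T ^ x * Real.exp (-(2*T))
          = T ^ x * Real.exp (-(2*T)) * T := by
        rw [MeasureTheory.setIntegral_const, MeasureTheory.measureReal_def, Real.volume_Ioc]
        rw [ENNReal.toReal_ofReal (by linarith : (0:ℝ) ≤ 2*T - T)]
        rw [smul_eq_mul]
        ring
      rw [← hconst]
      apply MeasureTheory.setIntegral_mono_on
      · exact MeasureTheory.integrableOn_const (by rw [Real.volume_Ioc]; exact ENNReal.ofReal_ne_top)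
      · exact hint.mono_set hsub
      · exact measurableSet_Ioc
      · intro t ht
        have h1 : Real.exp (-(2*T)) ≤ Real.exp (-t) := Real.exp_le_exp.mpr (by linarith [ht.2])
        have h2 : T ^ x ≤ t ^ (x + 1 - 1) := by
          rw [show x + 1 - 1 = x by ring]
          exact Real.rpow_le_rpow hT0.le ht.1.le hx
        have ht0 : (0:ℝ) < t := lt_of_lt_of_le hT0 ht.1.le
        calc T ^ x * Real.exp (-(2*T)) ≤ t ^ (x+1-1) * Real.exp (-t) := by
              apply mul_le_mul h2 h1 (Real.exp_pos _).le (by positivity)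
          _ = Real.exp (-t) * t ^ (x+1-1) := by ring
    calc T ^ x * (T * Real.exp (-(2*T))) = T ^ x * Real.exp (-(2*T)) * T := by ring
      _ ≤ _ := hstep2.trans hstep1
  -- conclude
  have hbound : ∀ x : ℝ, 0 ≤ x → Real.exp (c*x) / Real.Gamma (x+1)
      ≤ (Real.exp (2*T) / T) * Real.exp (-x) := by
    intro x hx
    have hTx : T ^ x = Real.exp ((c+1) * x) := by
      rw [hT, Real.rpow_def_of_pos (Real.exp_pos _), Real.log_exp]
    have hlowpos : 0 < T ^ x * (T * Real.exp (-(2*T))) := by positivity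
    have step : Real.exp (c*x) / Real.Gamma (x+1)
        ≤ Real.exp (c*x) / (T ^ x * (T * Real.exp (-(2*T)))) := by
      gcongr
      exact hGamma_ge x hx
    refine step.trans (le_of_eq ?_)
    have e1 : Real.exp (c*x) = Real.exp ((c+1)*x) * Real.exp (-x) := by
      rw [← Real.exp_add]; ring_nf
    rw [hTx, e1, mul_div_mul_left _ _ (Real.exp_ne_zero _), Real.exp_neg (2*T)]
    rw [Real.exp_neg x]
    field_simp
  have h0 : Filter.Tendsto (fun x : ℝ => (Real.exp (2*T) / T) * Real.exp (-x)) atTop (nhds 0) := by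
    have := Real.tendsto_exp_neg_atTop_nhds_zero
    have h := this.const_mul (Real.exp (2*T) / T)
    simpa using h
  apply squeeze_zero' ?_ ?_ h0
  · filter_upwards [eventually_ge_atTop (0:ℝ)] with x hx
    have : 0 < Real.Gamma (x + 1) := Real.Gamma_pos_of_pos (by linarith)
    positivity
  · filter_upwards [eventually_ge_atTop (0:ℝ)] with x hx
    exact hbound x hx

open Complex Set Filter Asymptotics Bornology

/-- Carlson's theorem (specialization): an entire function of exponential type
less than `π` vanishing at all nonnegative integers is identically zero. -/
theorem carlson_entire (f : ℂ → ℂ) (a b : ℝ) (ha : 0 < a) (hb0 : 0 < b)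
    (hbπ : b < Real.pi) (hf : Differentiable ℂ f)
    (hbd : ∀ z : ℂ, ‖f z‖ ≤ a * Real.exp (b * ‖z‖))
    (hz : ∀ n : ℕ, f (n : ℂ) = 0) :
    ∀ z : ℂ, f z = 0 := by
  obtain ⟨M, hM0, hM⟩ := FF_bounded_rhp ha hb0 hbπ hf hz hbd
  obtain ⟨δ, hδ0, hδ1, hδ⟩ := Gamma_lower
  -- imaginary axis bound for FF
  set C₁ : ℝ := max (4*a) (M * Real.exp ((π - b)/2)) with hC₁
  have hC₁0 : 0 < C₁ := lt_max_of_lt_left (by positivity)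
  have him_FF : ∀ y : ℝ, Complex.abs (FF f ((y:ℂ) * I)) ≤ C₁ * Real.exp (-((π - b) * |y|)) := by
    intro y
    have hre : ((y:ℂ) * I).re = 0 := by simp
    have him : ((y:ℂ) * I).im = y := by simp
    have habs : Complex.abs ((y:ℂ) * I) = |y| := by
      rw [map_mul, Complex.abs_I, Complex.abs_ofReal, mul_one]
    rcases le_or_gt (1/2) |y| with h | h
    · have := FF_bound_off_axis ha hbd (z := (y:ℂ) * I) (by rw [him]; exact h)
      rw [habs, him] at this
      refine this.trans ?_
      have : b * |y| - π * |y| = -((π - b) * |y|) := by ring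
      rw [this]
      apply mul_le_mul_of_nonneg_right (le_max_left _ _) (Real.exp_pos _).le
    · have h1 := hM ((y:ℂ) * I) (by rw [hre])
      have h2 : M ≤ C₁ * Real.exp (-((π - b) * |y|)) := by
        have e1 : M = (M * Real.exp ((π - b)/2)) * Real.exp (-((π - b)/2)) := by
          rw [mul_assoc, ← Real.exp_add]; norm_num
        rw [e1]
        have e2 : Real.exp (-((π - b)/2)) ≤ Real.exp (-((π - b) * |y|)) := by
          apply Real.exp_le_exp.mpr
          nlinarith [abs_nonneg y]
        calc (M * Real.exp ((π - b)/2)) * Real.exp (-((π - b)/2))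
            ≤ C₁ * Real.exp (-((π - b)/2)) :=
              mul_le_mul_of_nonneg_right (le_max_right _ _) (Real.exp_pos _).le
          _ ≤ C₁ * Real.exp (-((π - b) * |y|)) :=
              mul_le_mul_of_nonneg_left e2 hC₁0.le
      exact h1.trans h2
  -- choose k
  set k : ℕ := ⌈π/(π - b)⌉₊ with hk_def
  have hπb : 0 < π - b := by linarith
  have hk : π ≤ k * (π - b) := by
    have h1 := Nat.le_ceil (π/(π - b))
    calc π = (π/(π - b)) * (π - b) := by field_simp
      _ ≤ (k:ℝ) * (π - b) := by
        apply mul_le_mul_of_nonneg_right h1 hπb.le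
  have hk0 : k ≠ 0 := by
    intro hc
    rw [hc] at hk
    push_cast at hk
    nlinarith [Real.pi_pos]
  -- the auxiliary function G
  set G : ℂ → ℂ := fun w => (FF f w)^k * (Complex.Gamma (w+1))⁻¹ with hG
  -- Gamma lower bound specialization
  have hΓ : ∀ w : ℂ, 0 ≤ w.re → δ * Real.exp (-(π * |w.im|)) ≤ Complex.abs (Complex.Gamma (w+1)) := by
    intro w hw
    have h1 : 1 ≤ (w+1).re := by simp [Complex.add_re]; linarith
    have h2 : |(w+1).im| = |w.im| := by simp [Complex.add_im]
    have := hδ (w+1) h1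
    rwa [h2] at this
  have hΓpos : ∀ w : ℂ, 0 ≤ w.re → 0 < Complex.abs (Complex.Gamma (w+1)) := by
    intro w hw
    calc (0:ℝ) < δ * Real.exp (-(π * |w.im|)) := by positivity
      _ ≤ _ := hΓ w hw
  have hGbound : ∀ w : ℂ, 0 ≤ w.re →
      Complex.abs (G w) ≤ M^k * δ⁻¹ * Real.exp (π * |w.im|) := by
    intro w hw
    rw [hG]
    simp only [map_mul, map_pow, map_inv₀]
    have h1 : Complex.abs (FF f w) ^ k ≤ M^k :=
      pow_le_pow_left₀ (Complex.abs.nonneg _) (hM w hw) k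
    have h2 : (Complex.abs (Complex.Gamma (w+1)))⁻¹ ≤ (δ * Real.exp (-(π * |w.im|)))⁻¹ := by
      apply inv_anti₀ (by positivity) (hΓ w hw)
    calc Complex.abs (FF f w) ^ k * (Complex.abs (Complex.Gamma (w+1)))⁻¹
        ≤ M^k * (δ * Real.exp (-(π * |w.im|)))⁻¹ := by
          apply mul_le_mul h1 h2 (by positivity) (by positivity)
      _ = M^k * δ⁻¹ * Real.exp (π * |w.im|) := by
          rw [mul_inv, Real.exp_neg, inv_inv]; ring
  -- differentiability
  have hGdiff : DiffContOnCl ℂ G {w : ℂ | 0 < w.re} := by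
    apply DifferentiableOn.diffContOnCl
    intro w hw
    have hw' : 0 ≤ w.re := by
      have := Complex.closure_setOf_lt_re 0
      rw [this] at hw
      exact hw
    apply DifferentiableAt.differentiableWithinAt
    apply DifferentiableAt.mul
    · exact (FF_differentiableAt hf hz (by linarith)).pow k
    · exact (Complex.differentiable_one_div_Gamma.comp
        ((differentiable_id.add_const 1))) w
  -- apply the PL superexponential decay theorem
  have hEq : EqOn G 0 {w : ℂ | 0 ≤ w.re} := by
    apply PhragmenLindelof.eq_zero_on_right_half_plane_of_superexponential_decay hGdiff
    · -- growth
      refine ⟨1, one_lt_two, π, ?_⟩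
      apply Asymptotics.IsBigO.of_bound (M^k * δ⁻¹)
      have hev : ∀ᶠ w : ℂ in cobounded ℂ ⊓ Filter.principal {w : ℂ | 0 < w.re},
          w ∈ {w : ℂ | 0 < w.re} :=
        (Filter.eventually_principal.mpr (fun w hw => hw)).filter_mono inf_le_right
      filter_upwards [hev] with w hw
      rw [Complex.norm_eq_abs, Real.norm_eq_abs,
        _root_.abs_of_nonneg (Real.exp_pos _).le]
      refine (hGbound w (le_of_lt hw)).trans ?_
      apply mul_le_mul_of_nonneg_left _ (by positivity)
      apply Real.exp_le_exp.mpr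
      rw [Real.rpow_one]
      have := Complex.abs_im_le_norm w
      nlinarith [Real.pi_pos, Complex.abs.nonneg w]
    · -- superpolynomial decay on the real axis
      intro n
      have hbound : ∀ x : ℝ, 0 ≤ x →
          Real.exp x ^ n * ‖G (x:ℂ)‖ ≤ M^k * (Real.exp ((n:ℝ) * x) / Real.Gamma (x+1)) := by
        intro x hx
        have hre : ((x:ℂ)).re = x := by simp
        have hΓeq : Complex.abs (Complex.Gamma ((x:ℂ)+1)) = Real.Gamma (x+1) := by
          rw [show ((x:ℂ)+1) = ((x+1:ℝ):ℂ) by push_cast; ring, Complex.Gamma_ofReal,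
            Complex.abs_ofReal, _root_.abs_of_pos (Real.Gamma_pos_of_pos (by linarith))]
        rw [Complex.norm_eq_abs, hG]
        simp only [map_mul, map_pow, map_inv₀]
        rw [hΓeq]
        have h1 : Complex.abs (FF f (x:ℂ)) ^ k ≤ M^k :=
          pow_le_pow_left₀ (Complex.abs.nonneg _) (hM (x:ℂ) (by rw [hre]; exact hx)) k
        have h2 : Real.exp x ^ n = Real.exp ((n:ℝ) * x) := by
          rw [← Real.exp_nat_mul]
        rw [h2]
        have hΓpos' : 0 < Real.Gamma (x+1) := Real.Gamma_pos_of_pos (by linarith)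
        calc Real.exp ((n:ℝ)*x) * (Complex.abs (FF f (x:ℂ)) ^ k * (Real.Gamma (x+1))⁻¹)
            ≤ Real.exp ((n:ℝ)*x) * (M^k * (Real.Gamma (x+1))⁻¹) := by
              apply mul_le_mul_of_nonneg_left _ (Real.exp_pos _).le
              apply mul_le_mul_of_nonneg_right h1 (by positivity)
          _ = M^k * (Real.exp ((n:ℝ)*x) / Real.Gamma (x+1)) := by
              rw [div_eq_mul_inv]; ring
      have h0 : Filter.Tendsto (fun x : ℝ => M^k * (Real.exp ((n:ℝ) * x) / Real.Gamma (x+1)))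
          atTop (nhds 0) := by
        have := (exp_div_Gamma_tendsto (c := (n:ℝ)) (Nat.cast_nonneg n)).const_mul (M^k)
        simpa using this
      apply squeeze_zero' ?_ ?_ h0
      · filter_upwards [eventually_ge_atTop (0:ℝ)] with x hx
        positivity
      · filter_upwards [eventually_ge_atTop (0:ℝ)] with x hx
        exact hbound x hx
    · -- bounded on the imaginary axis
      refine ⟨C₁^k * δ⁻¹, ?_⟩
      intro x
      have hre : ((x:ℂ) * I).re = 0 := by simp
      have him : ((x:ℂ) * I).im = x := by simp
      rw [Complex.norm_eq_abs, hG]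
      simp only [map_mul, map_pow, map_inv₀]
      have h1 : Complex.abs (FF f ((x:ℂ)*I)) ^ k ≤ C₁^k * Real.exp (-(k * ((π - b) * |x|))) := by
        calc Complex.abs (FF f ((x:ℂ)*I)) ^ k ≤ (C₁ * Real.exp (-((π - b) * |x|)))^k :=
              pow_le_pow_left₀ (Complex.abs.nonneg _) (him_FF x) k
          _ = C₁^k * Real.exp (-(k * ((π - b) * |x|))) := by
              rw [mul_pow, ← Real.exp_nat_mul]; ring_nf
      have h2 : (Complex.abs (Complex.Gamma ((x:ℂ)*I+1)))⁻¹
          ≤ δ⁻¹ * Real.exp (π * |x|) := by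
        have := hΓ ((x:ℂ)*I) (by rw [hre])
        rw [him] at this
        have h3 := inv_anti₀ (by positivity : (0:ℝ) < δ * Real.exp (-(π * |x|))) this
        refine h3.trans (le_of_eq ?_)
        rw [mul_inv, Real.exp_neg, inv_inv]
      calc Complex.abs (FF f ((x:ℂ)*I)) ^ k * (Complex.abs (Complex.Gamma ((x:ℂ)*I+1)))⁻¹
          ≤ (C₁^k * Real.exp (-(k * ((π - b) * |x|)))) * (δ⁻¹ * Real.exp (π * |x|)) := by
            apply mul_le_mul h1 h2 (by positivity) (by positivity)
        _ = C₁^k * δ⁻¹ * Real.exp (π * |x| - k * ((π - b) * |x|)) := by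
            rw [Real.exp_sub, Real.exp_neg]; field_simp
        _ ≤ C₁^k * δ⁻¹ * 1 := by
            apply mul_le_mul_of_nonneg_left _ (by positivity)
            rw [← Real.exp_zero]
            apply Real.exp_le_exp.mpr
            nlinarith [abs_nonneg x, hk, abs_nonneg x]
        _ = C₁^k * δ⁻¹ := mul_one _
  -- FF f vanishes on the right half plane
  have hFF0 : ∀ w : ℂ, 0 ≤ w.re → FF f w = 0 := by
    intro w hw
    have hGw : G w = 0 := hEq hw
    rw [hG] at hGw
    have hΓne : (Complex.Gamma (w+1))⁻¹ ≠ 0 := by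
      apply inv_ne_zero
      apply Complex.Gamma_ne_zero
      intro m hc
      have : (w+1).re = -(m:ℝ) := by rw [hc]; simp
      simp [Complex.add_re] at this
      have hm : (0:ℝ) ≤ m := Nat.cast_nonneg m
      linarith
    have := (mul_eq_zero.mp hGw).resolve_right hΓne
    exact pow_eq_zero_iff hk0 |>.mp this
  -- f vanishes on the right half plane
  have hf0 : ∀ w : ℂ, 0 ≤ w.re → f w = 0 := by
    intro w hw
    by_cases hint : ∃ n : ℤ, w = (n : ℂ)
    · rcases hint with ⟨n, rfl⟩
      have hn0 : (0:ℤ) ≤ n := by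
        have : (0:ℝ) ≤ (n:ℝ) := by simpa using hw
        exact_mod_cast this
      have := hz n.toNat
      rwa [show ((n.toNat : ℕ) : ℂ) = (n : ℂ) by
        exact_mod_cast congrArg Int.cast (Int.toNat_of_nonneg hn0)] at this
    · rw [f_eq_FF_mul (f := f) hint, hFF0 w hw, zero_mul]
  -- identity theorem
  intro z
  have hev : f =ᶠ[nhds 1] 0 := by
    filter_upwards [Metric.ball_mem_nhds (1:ℂ) one_pos] with w hw
    apply hf0
    rw [Metric.mem_ball] at hw
    have h1 : Complex.abs (w - 1) < 1 := by
      rw [Complex.dist_eq] at hw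
      exact hw
    have h2 : |(w - 1).re| ≤ Complex.abs (w - 1) := Complex.abs_re_le_abs _
    have h3 : (w - 1).re = w.re - 1 := by simp
    nlinarith [abs_le.mp (h2.trans h1.le) |>.1, neg_abs_le (w-1).re]
  have hana := (hf.differentiableOn.analyticOnNhd isOpen_univ)
  have := hana.eqOn_zero_of_preconnected_of_eventuallyEq_zero
    isPreconnected_univ (mem_univ (1:ℂ)) hev
  exact this (mem_univ z)
end

section
/- Let A be an n×n complex matrix whose eigenvalues are all positive real numbers. Then for each vector v, the exponential-polynomial expression for Σ_{j=0}^{u-1} A^j v, written as Σ_{s,t} a_{st} λ_s^u u^t with λ_s > 0, extends to an analytic function of u ∈ ℂ given by replacing λ_s^u with exp(u log λ_s); this extension satisfies a bound ‖F(u)‖ ≤ a·exp(b|u|) with b = max_s |log λ_s| + n. -/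
open Module Module.End Finset
open scoped Matrix

private lemma scalar_key {μ : ℂ} (hμ : μ ≠ 0) (m t : ℕ) :
    μ ^ m * ((m.descFactorial t : ℂ) / ((t.factorial : ℂ) * μ ^ t)) = (m.choose t : ℂ) * μ ^ (m - t) := by
  have ht : (t.factorial : ℂ) ≠ 0 := Nat.cast_ne_zero.2 t.factorial_ne_zero
  rcases le_or_gt t m with h | h
  · have hm : m - t + t = m := Nat.sub_add_cancel h
    rw [Nat.descFactorial_eq_factorial_mul_choose]
    push_cast
    rw [← hm, pow_add]
    field_simp
    rw [Nat.add_sub_cancel]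
    ring
  · rw [Nat.choose_eq_zero_of_lt h, Nat.descFactorial_eq_zero_iff_lt.2 h]
    simp

private lemma key_sum {V : Type*} [AddCommGroup V] [Module ℂ V]
    (T : Module.End ℂ V) (μ : ℂ) (hμ : μ ≠ 0) (K : ℕ) (x : V)
    (hx : ((T - μ • 1) ^ K) x = 0) (m : ℕ) :
    ∑ k ∈ Finset.range K, (μ ^ m * (m : ℂ) ^ k) •
      (∑ t ∈ Finset.range K,
        (((descPochhammer ℂ t).coeff k) / ((t.factorial : ℂ) * μ ^ t)) • (((T - μ • 1) ^ t) x))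
      = (T ^ m) x := by
  set N : Module.End ℂ V := T - μ • 1 with hN
  have hNx : ∀ t, K ≤ t → (N ^ t) x = 0 := by
    intro t ht
    have : N ^ t = N ^ (t - K) * N ^ K := by
      rw [← pow_add]; congr 1; omega
    rw [this, Module.End.mul_apply, hx, map_zero]
  have step1 : ∀ k ∈ Finset.range K,
      (μ ^ m * (m : ℂ) ^ k) •
        (∑ t ∈ Finset.range K,
          (((descPochhammer ℂ t).coeff k) / ((t.factorial : ℂ) * μ ^ t)) • ((N ^ t) x)) =
      ∑ t ∈ Finset.range K,
        (μ ^ m * (m : ℂ) ^ k * (((descPochhammer ℂ t).coeff k) / ((t.factorial : ℂ) * μ ^ t))) •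
          ((N ^ t) x) := by
    intro k _
    rw [Finset.smul_sum]
    exact Finset.sum_congr rfl fun t _ => (smul_smul _ _ _)
  rw [Finset.sum_congr rfl step1, Finset.sum_comm]
  have step2 : ∀ t ∈ Finset.range K,
      (∑ k ∈ Finset.range K,
        (μ ^ m * (m : ℂ) ^ k * (((descPochhammer ℂ t).coeff k) / ((t.factorial : ℂ) * μ ^ t))) •
          ((N ^ t) x)) = ((m.choose t : ℂ) * μ ^ (m - t)) • ((N ^ t) x) := by
    intro t htK
    rw [← Finset.sum_smul]
    congr 1
    have hdeg : (descPochhammer ℂ t).natDegree < K := by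
      rw [descPochhammer_natDegree]; exact Finset.mem_range.1 htK
    have heval : ∑ k ∈ Finset.range K, (descPochhammer ℂ t).coeff k * (m : ℂ) ^ k
        = (m.descFactorial t : ℂ) := by
      rw [← Polynomial.eval_eq_sum_range' hdeg, descPochhammer_eval_eq_descFactorial]
    calc ∑ k ∈ Finset.range K,
          (μ ^ m * (m : ℂ) ^ k * (((descPochhammer ℂ t).coeff k) / ((t.factorial : ℂ) * μ ^ t)))
        = (μ ^ m / ((t.factorial : ℂ) * μ ^ t)) *
            ∑ k ∈ Finset.range K, (descPochhammer ℂ t).coeff k * (m : ℂ) ^ k := by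
          rw [Finset.mul_sum]; exact Finset.sum_congr rfl fun k _ => by ring
      _ = μ ^ m * ((m.descFactorial t : ℂ) / ((t.factorial : ℂ) * μ ^ t)) := by
          rw [heval]; ring
      _ = (m.choose t : ℂ) * μ ^ (m - t) := scalar_key hμ m t
  rw [Finset.sum_congr rfl step2]
  -- binomial expansion
  have hT : T = N + μ • 1 := by rw [hN]; abel
  have hcomm : Commute N (μ • (1 : Module.End ℂ V)) := (Commute.one_right N).smul_right μ
  have hbin : (T ^ m) x = ∑ t ∈ Finset.range (m + 1),
      ((m.choose t : ℂ) * μ ^ (m - t)) • ((N ^ t) x) := by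
    rw [hT, hcomm.add_pow]
    rw [LinearMap.sum_apply]
    refine Finset.sum_congr rfl fun t _ => ?_
    rw [Module.End.mul_apply, Module.End.mul_apply]
    have h1 : ((m.choose t : ℕ) : Module.End ℂ V) x = ((m.choose t : ℂ)) • x := by
      simp [Nat.cast_smul_eq_nsmul]
    rw [h1]
    have h2 : (μ • (1 : Module.End ℂ V)) ^ (m - t) = μ ^ (m - t) • 1 := by
      rw [smul_pow, one_pow]
    rw [h2, LinearMap.smul_apply, Module.End.one_apply, map_smul, map_smul, smul_smul, mul_comm]
  rw [hbin]
  -- equate the two ranges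
  have hsub1 : Finset.range (m + 1) ⊆ Finset.range (m + 1 + K) :=
    Finset.range_subset_range.2 (by omega)
  have hsub2 : Finset.range K ⊆ Finset.range (m + 1 + K) :=
    Finset.range_subset_range.2 (by omega)
  rw [Finset.sum_subset hsub1 (fun t _ ht => by
        rw [Nat.choose_eq_zero_of_lt (by simpa using ht)]; simp),
      ← Finset.sum_subset hsub2 (fun t _ ht => by
        rw [hNx t (by simpa using ht)]; simp)]

private lemma pow_mulVec_expPoly {ι : Type*} [Fintype ι] [DecidableEq ι]
    (B : Matrix ι ι ℂ)
    (hB : ∀ μ ∈ spectrum ℂ B, ∃ r : ℝ, 0 < r ∧ μ = (r : ℂ)) (w : ι → ℂ) :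
    ∃ (s : Finset (ℝ × ℕ)) (a : ℝ × ℕ → (ι → ℂ)),
      (∀ p ∈ s, 0 < p.1 ∧ ((p.1 : ℂ) ∈ spectrum ℂ B) ∧ p.2 < Fintype.card ι) ∧
      ∀ m : ℕ, (B ^ m).mulVec w = ∑ p ∈ s, (((p.1 : ℂ)) ^ m * (m : ℂ) ^ p.2) • a p := by
  classical
  set K := Fintype.card ι with hK
  set T : Module.End ℂ (ι → ℂ) := Matrix.toLinAlgEquiv' B with hT
  have hspec : spectrum ℂ T = spectrum ℂ B := AlgEquiv.spectrum_eq _ _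
  have htop : (⨆ μ : ℂ, T.maxGenEigenspace μ) = ⊤ := iSup_maxGenEigenspace_eq_top T
  obtain ⟨f, hf, hfsum⟩ := (Submodule.mem_iSup_iff_exists_finsupp _ w).1
    (htop ▸ Submodule.mem_top)
  have hfinrank : finrank ℂ (ι → ℂ) = K := by
    simp [hK, Module.finrank_fintype_fun_eq_card]
  have hker : ∀ μ : ℂ, ((T - μ • 1) ^ K) (f μ) = 0 := by
    intro μ
    have h1 := hf μ
    rw [Module.End.maxGenEigenspace_eq_genEigenspace_finrank, hfinrank,
      Module.End.mem_genEigenspace_nat, LinearMap.mem_ker] at h1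
    exact h1
  have hmem : ∀ μ ∈ f.support, μ ∈ spectrum ℂ B := by
    intro μ hμ
    rw [← hspec, ← Module.End.hasEigenvalue_iff_mem_spectrum]
    refine Module.End.hasEigenvalue_of_hasGenEigenvalue (k := K) ?_
    refine Submodule.ne_bot_iff _ |>.2 ⟨f μ, ?_, Finsupp.mem_support_iff.1 hμ⟩
    rw [Module.End.mem_genEigenspace_nat, LinearMap.mem_ker]
    exact hker μ
  have hre : ∀ μ ∈ f.support, 0 < μ.re ∧ ((μ.re : ℝ) : ℂ) = μ := by
    intro μ hμ
    obtain ⟨r, hr, rfl⟩ := hB μ (hmem μ hμ)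
    simp [hr]
  refine ⟨(f.support.image Complex.re) ×ˢ Finset.range K,
    fun p => ∑ t ∈ Finset.range K,
      (((descPochhammer ℂ t).coeff p.2) / ((t.factorial : ℂ) * (p.1 : ℂ) ^ t)) •
        (((T - (p.1 : ℂ) • 1) ^ t) (f (p.1 : ℂ))), ?_, ?_⟩
  · rintro ⟨r, k⟩ hp
    rw [Finset.mem_product] at hp
    obtain ⟨hr, hk⟩ := hp
    obtain ⟨μ, hμ, rfl⟩ := Finset.mem_image.1 hr
    obtain ⟨h1, h2⟩ := hre μ hμ
    exact ⟨h1, by rw [h2]; exact hmem μ hμ, Finset.mem_range.1 hk⟩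
  · intro m
    have hBm : (B ^ m).mulVec w = (T ^ m) w := by
      rw [hT, ← map_pow]
      exact (Matrix.toLinAlgEquiv'_apply _ _).symm
    rw [hBm, ← hfsum, Finsupp.sum, map_sum]
    rw [Finset.sum_product]
    have hinj : Set.InjOn Complex.re f.support := by
      intro μ1 h1 μ2 h2 h
      rw [← (hre μ1 h1).2, ← (hre μ2 h2).2, h]
    rw [Finset.sum_image hinj]
    refine Finset.sum_congr rfl fun μ hμ => ?_
    obtain ⟨h1, h2⟩ := hre μ hμ
    have hμ0 : μ ≠ 0 := by rw [← h2]; exact_mod_cast Complex.ofReal_ne_zero.2 h1.ne'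
    rw [← key_sum T μ hμ0 K (f μ) (hker μ) m]
    refine Finset.sum_congr rfl fun k _ => ?_
    simp only [h2]
private lemma spec_block {n : ℕ} (A : Matrix (Fin n) (Fin n) ℂ) (C : Matrix (Fin n) Unit ℂ) :
    ∀ μ ∈ spectrum ℂ (Matrix.fromBlocks A C 0 (1 : Matrix Unit Unit ℂ)),
      μ ∈ spectrum ℂ A ∨ μ = 1 := by
  intro μ hμ
  by_contra hcon
  push_neg at hcon
  obtain ⟨h1, h2⟩ := hcon
  rw [spectrum.mem_iff] at hμ
  apply hμ
  rw [Matrix.isUnit_iff_isUnit_det, isUnit_iff_ne_zero]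
  have e1 : (algebraMap ℂ (Matrix (Fin n ⊕ Unit) (Fin n ⊕ Unit) ℂ) μ) -
      Matrix.fromBlocks A C 0 1 =
      Matrix.fromBlocks (μ • 1 - A) (-C) 0 (μ • 1 - 1) := by
    ext i j
    rcases i with i | i <;> rcases j with j | j <;>
      simp [Matrix.algebraMap_matrix_apply, Matrix.one_apply, Matrix.smul_apply,
        Matrix.sub_apply, apply_ite]
  rw [e1, Matrix.det_fromBlocks_zero₂₁]
  have hA := spectrum.notMem_iff.1 h1
  rw [Matrix.isUnit_iff_isUnit_det, isUnit_iff_ne_zero, Algebra.algebraMap_eq_smul_one] at hA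
  have hD : (μ • 1 - 1 : Matrix Unit Unit ℂ).det = μ - 1 := by
    rw [Matrix.det_unique]
    simp [Matrix.one_apply]
  rw [hD]
  exact mul_ne_zero hA (sub_ne_zero.2 h2)

private lemma iter_block {n : ℕ} (A : Matrix (Fin n) (Fin n) ℂ) (v : Fin n → ℂ) (m : ℕ) :
    ((Matrix.fromBlocks A (Matrix.of fun i (_ : Unit) => v i) 0
        (1 : Matrix Unit Unit ℂ)) ^ m).mulVec (Sum.elim (fun _ => 0) fun _ => 1) =
      Sum.elim (∑ j ∈ Finset.range m, (A ^ j).mulVec v) (fun _ => 1) := by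
  induction m with
  | zero =>
    rw [pow_zero, Matrix.one_mulVec]
    ext (i | i) <;> simp
  | succ m ih =>
    rw [pow_succ', ← Matrix.mulVec_mulVec, ih, Matrix.fromBlocks_mulVec]
    have hC : (Matrix.of fun i (_ : Unit) => v i) *ᵥ
        ((Sum.elim (∑ j ∈ Finset.range m, (A ^ j).mulVec v) (fun _ => 1)) ∘ Sum.inr) = v := by
      funext i
      simp [Matrix.mulVec, dotProduct]
    have hsum : A *ᵥ (((Sum.elim (∑ j ∈ Finset.range m, (A ^ j).mulVec v)
          (fun _ => 1)) : Fin n ⊕ Unit → ℂ) ∘ Sum.inl) =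
        ∑ j ∈ Finset.range m, (A ^ (j + 1)) *ᵥ v := by
      have hl : ((Sum.elim (∑ j ∈ Finset.range m, (A ^ j).mulVec v)
          (fun _ => (1:ℂ))) : Fin n ⊕ Unit → ℂ) ∘ Sum.inl =
          ∑ j ∈ Finset.range m, (A ^ j).mulVec v := rfl
      rw [hl, ← Matrix.mulVecLin_apply, map_sum]
      refine Finset.sum_congr rfl fun j _ => ?_
      rw [Matrix.mulVecLin_apply, Matrix.mulVec_mulVec, ← pow_succ']
    rw [hC, hsum]
    ext (i | i)
    · simp [Finset.sum_range_succ']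
    · simp


/-- For a matrix `A` with all eigenvalues positive reals, the partial geometric sums
`Σ_{j<u} A^j v`, written in exponential-polynomial form `Σ a_{st} λ_s^u u^t` with
`λ_s > 0`, extend to an analytic function of `u ∈ ℂ` (replacing `λ_s^u` by
`exp(u log λ_s)`) bounded by `a·exp(b|u|)` with `b = max_s |log λ_s| + n`. -/
theorem geom_sum_analytic_extension (n : ℕ) (A : Matrix (Fin n) (Fin n) ℂ)
    (hA : ∀ μ ∈ spectrum ℂ A, ∃ r : ℝ, 0 < r ∧ μ = (r : ℂ)) (v : Fin n → ℂ) :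
    ∃ (s : Finset (ℝ × ℕ)) (a : ℝ × ℕ → (Fin n → ℂ)),
      (∀ p ∈ s, 0 < p.1) ∧
      (∀ m : ℕ, (∑ j ∈ Finset.range m, (A ^ j).mulVec v) =
        ∑ p ∈ s, (((p.1 : ℂ)) ^ m * (m : ℂ) ^ p.2) • a p) ∧
      Differentiable ℂ
        (fun u : ℂ => ∑ p ∈ s, (Complex.exp (u * Real.log p.1) * u ^ p.2) • a p) ∧
      ∃ a0 : ℝ, 0 < a0 ∧ ∀ u : ℂ,
        ‖∑ p ∈ s, (Complex.exp (u * Real.log p.1) * u ^ p.2) • a p‖ ≤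
          a0 * Real.exp
            ((sSup ((fun μ : ℂ => |Real.log μ.re|) '' spectrum ℂ A) + n) * ‖u‖) := by
  rcases Nat.eq_zero_or_pos n with hn | hn
  · subst hn
    refine ⟨∅, fun _ => 0, by simp, ?_, ?_, 1, one_pos, ?_⟩
    · intro m
      funext i
      exact i.elim0
    · simpa using differentiable_const (0 : Fin 0 → ℂ)
    · intro u
      simp only [Finset.sum_empty, norm_zero, one_mul]
      positivity
  · set B := Matrix.fromBlocks A (Matrix.of fun i (_ : Unit) => v i) 0
      (1 : Matrix Unit Unit ℂ) with hBdef
    have hB : ∀ μ ∈ spectrum ℂ B, ∃ r : ℝ, 0 < r ∧ μ = (r : ℂ) := by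
      intro μ hμ
      rcases spec_block A _ μ hμ with h | h
      · exact hA μ h
      · exact ⟨1, one_pos, by simp [h]⟩
    obtain ⟨s, a, hs, hrep⟩ := pow_mulVec_expPoly B hB (Sum.elim (fun _ => 0) fun _ => 1)
    set a' : ℝ × ℕ → Fin n → ℂ := fun p i => a p (Sum.inl i) with ha'
    refine ⟨s, a', fun p hp => (hs p hp).1, ?_, ?_, ?_⟩
    · intro m
      funext i
      have h1 := congrFun (hrep m) (Sum.inl i)
      rw [iter_block A v m] at h1
      simpa using h1
    · refine Differentiable.fun_sum fun p _ => Differentiable.smul_const ?_ _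
      exact (Complex.differentiable_exp.comp (differentiable_id.mul_const _)).mul
        (differentiable_pow p.2)
    · set S := sSup ((fun μ : ℂ => |Real.log μ.re|) '' spectrum ℂ A) with hS
      have hfin : ((fun μ : ℂ => |Real.log μ.re|) '' spectrum ℂ A).Finite :=
        A.finite_spectrum.image _
      have hbdd : BddAbove ((fun μ : ℂ => |Real.log μ.re|) '' spectrum ℂ A) := hfin.bddAbove
      haveI : Nonempty (Fin n) := ⟨⟨0, hn⟩⟩
      have hSnn : 0 ≤ S := by
        obtain ⟨μ0, hμ0⟩ := spectrum.nonempty_of_isAlgClosed_of_finiteDimensional ℂ A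
        exact le_trans (abs_nonneg _) (le_csSup hbdd ⟨μ0, hμ0, rfl⟩)
      have hlog : ∀ p ∈ s, |Real.log p.1| ≤ S := by
        intro p hp
        obtain ⟨hpos, hspecB, _⟩ := hs p hp
        rcases spec_block A _ _ hspecB with h | h
        · refine le_csSup hbdd ⟨(p.1 : ℂ), h, ?_⟩
          simp
        · have hp1 : p.1 = 1 := by exact_mod_cast h
          simp [hp1, Real.log_one, hSnn]
      refine ⟨1 + ∑ p ∈ s, (p.2.factorial : ℝ) * ‖a' p‖, by positivity, fun u => ?_⟩
      have hterm : ∀ p ∈ s,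
          ‖(Complex.exp (u * Real.log p.1) * u ^ p.2) • a' p‖ ≤
            ((p.2.factorial : ℝ) * ‖a' p‖) * Real.exp ((S + n) * ‖u‖) := by
        intro p hp
        obtain ⟨hpos, hspecB, hdeg⟩ := hs p hp
        have hdegn : p.2 ≤ n := by
          have := hdeg
          rw [Fintype.card_sum, Fintype.card_fin, Fintype.card_unit] at this
          omega
        rw [norm_smul, norm_mul, norm_pow,
          Complex.norm_exp]
        have hre : (u * (Real.log p.1 : ℂ)).re = u.re * Real.log p.1 := by
          simp [Complex.mul_re]
        have h1 : Real.exp ((u * (Real.log p.1 : ℂ)).re) ≤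
            Real.exp (‖u‖ * |Real.log p.1|) := by
          rw [hre]
          apply Real.exp_le_exp.2
          calc u.re * Real.log p.1 ≤ |u.re * Real.log p.1| := le_abs_self _
            _ = |u.re| * |Real.log p.1| := abs_mul _ _
            _ ≤ ‖u‖ * |Real.log p.1| :=
                mul_le_mul_of_nonneg_right (Complex.abs_re_le_norm u) (abs_nonneg _)
        have h2 : ‖u‖ ^ p.2 ≤ (p.2.factorial : ℝ) * Real.exp ‖u‖ := by
          have hsingle : ‖u‖ ^ p.2 / (p.2.factorial : ℝ) ≤ Real.exp ‖u‖ := by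
            refine le_trans (Finset.single_le_sum (f := fun i => ‖u‖ ^ i / (i.factorial : ℝ))
              (fun i _ => by positivity) (Finset.self_mem_range_succ p.2)) ?_
            exact Real.sum_le_exp_of_nonneg (norm_nonneg u) (p.2 + 1)
          rw [div_le_iff₀ (by positivity)] at hsingle
          linarith [hsingle]
        calc Real.exp ((u * (Real.log p.1 : ℂ)).re) * ‖u‖ ^ p.2 * ‖a' p‖
            ≤ Real.exp (‖u‖ * |Real.log p.1|) *
                ((p.2.factorial : ℝ) * Real.exp ‖u‖) * ‖a' p‖ := by
              apply mul_le_mul_of_nonneg_right _ (norm_nonneg _)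
              exact mul_le_mul h1 h2 (by positivity) (Real.exp_nonneg _)
          _ = ((p.2.factorial : ℝ) * ‖a' p‖) *
                Real.exp (‖u‖ * |Real.log p.1| + ‖u‖) := by
              rw [Real.exp_add]; ring
          _ ≤ ((p.2.factorial : ℝ) * ‖a' p‖) * Real.exp ((S + n) * ‖u‖) := by
              apply mul_le_mul_of_nonneg_left _ (by positivity)
              apply Real.exp_le_exp.2
              have habs : (0 : ℝ) ≤ ‖u‖ := norm_nonneg u  -- check name
              have hlogp := hlog p hp
              have hn1 : (1 : ℝ) ≤ (n : ℝ) := by exact_mod_cast hn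
              nlinarith [habs, hlogp, hn1]
      calc ‖∑ p ∈ s, (Complex.exp (u * Real.log p.1) * u ^ p.2) • a' p‖
          ≤ ∑ p ∈ s, ‖(Complex.exp (u * Real.log p.1) * u ^ p.2) • a' p‖ :=
            norm_sum_le _ _
        _ ≤ ∑ p ∈ s, ((p.2.factorial : ℝ) * ‖a' p‖) * Real.exp ((S + n) * ‖u‖) :=
            Finset.sum_le_sum hterm
        _ = (∑ p ∈ s, (p.2.factorial : ℝ) * ‖a' p‖) * Real.exp ((S + n) * ‖u‖) :=
            (Finset.sum_mul _ _ _).symm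
        _ ≤ (1 + ∑ p ∈ s, (p.2.factorial : ℝ) * ‖a' p‖) * Real.exp ((S + n) * ‖u‖) := by
            apply mul_le_mul_of_nonneg_right _ (Real.exp_nonneg _)
            linarith [Finset.sum_nonneg (fun p (_ : p ∈ s) =>
              mul_nonneg (by positivity) (norm_nonneg (a' p)))]
end
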